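/- Let φ : ℂ[x₁, …, x₉] → ℂ[z₁, z₂, z₃] be the ℂ-algebra homomorphism determined by φ(x₁) = z₁⁴, φ(x₂) = z₁³z₂, φ(x₃) = z₁²z₂², φ(x₄) = z₁z₂³, φ(x₅) = z₂⁴, φ(x₆) = z₁²z₃, φ(x₇) = z₁z₂z₃, φ(x₈) = z₂²z₃, φ(x₉) = z₃². Then the kernel of φ, as an ideal of ℂ[x₁, …, x₉], cannot be generated by six elements: there is no finite set S of polynomials with card S ≤ 6 whose ideal span equals ker φ. -/

import Mathlib

open MvPolynomial

/-- The `ℂ`-algebra homomorphism `φ : ℂ[x₁,…,x₉] → ℂ[z₁,z₂,z₃]` sending the nine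
variables to the nine invariant monomials
`z₁⁴, z₁³z₂, z₁²z₂², z₁z₂³, z₂⁴, z₁²z₃, z₁z₂z₃, z₂²z₃, z₃²`. -/
noncomputable def φinv : MvPolynomial (Fin 9) ℂ →ₐ[ℂ] MvPolynomial (Fin 3) ℂ :=
  aeval ![X 0 ^ 4, X 0 ^ 3 * X 1, X 0 ^ 2 * X 1 ^ 2, X 0 * X 1 ^ 3, X 1 ^ 4,
          X 0 ^ 2 * X 2, X 0 * X 1 * X 2, X 1 ^ 2 * X 2, X 2 ^ 2]

/-- exponent vectors of the nine monomials -/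
noncomputable def vv : Fin 9 → (Fin 3 →₀ ℕ) :=
  ![Finsupp.single 0 4, Finsupp.single 0 3 + Finsupp.single 1 1,
    Finsupp.single 0 2 + Finsupp.single 1 2, Finsupp.single 0 1 + Finsupp.single 1 3,
    Finsupp.single 1 4, Finsupp.single 0 2 + Finsupp.single 2 1,
    Finsupp.single 0 1 + Finsupp.single 1 1 + Finsupp.single 2 1,
    Finsupp.single 1 2 + Finsupp.single 2 1, Finsupp.single 2 2]

noncomputable def MM (n : Fin 9 →₀ ℕ) : Fin 3 →₀ ℕ := ∑ i, n i • vv i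

lemma prod_monomial {ι : Type*} (s : Finset ι) (g : ι → (Fin 3 →₀ ℕ)) :
    (∏ i ∈ s, monomial (g i) (1 : ℂ)) = monomial (∑ i ∈ s, g i) 1 := by
  classical
  induction s using Finset.induction with
  | empty => simp
  | insert h ih => simp_all [monomial_mul]

lemma φ_monomial (n : Fin 9 →₀ ℕ) (c : ℂ) :
    φinv (monomial n c) = monomial (MM n) c := by
  have himg : ∀ i : Fin 9,
      (![X 0 ^ 4, X 0 ^ 3 * X 1, X 0 ^ 2 * X 1 ^ 2, X 0 * X 1 ^ 3, X 1 ^ 4,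
        X 0 ^ 2 * X 2, X 0 * X 1 * X 2, X 1 ^ 2 * X 2, X 2 ^ 2] i : MvPolynomial (Fin 3) ℂ)
        = monomial (vv i) 1 := by
    intro i
    have Xm : ∀ a : Fin 3, (X a : MvPolynomial (Fin 3) ℂ) = monomial (Finsupp.single a 1) 1 :=
      fun a => rfl
    fin_cases i
    · show (X 0^4 : MvPolynomial (Fin 3) ℂ) = monomial (Finsupp.single 0 4) 1
      simp [Xm, X_pow_eq_monomial, monomial_pow, Finsupp.smul_single, smul_eq_mul]
    · show (X 0^3*X 1 : MvPolynomial (Fin 3) ℂ)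
        = monomial (Finsupp.single 0 3 + Finsupp.single 1 1) 1
      simp [Xm, X_pow_eq_monomial, monomial_pow, Finsupp.smul_single, smul_eq_mul, monomial_mul]
    · show (X 0^2*X 1^2 : MvPolynomial (Fin 3) ℂ)
        = monomial (Finsupp.single 0 2 + Finsupp.single 1 2) 1
      simp [Xm, X_pow_eq_monomial, monomial_pow, Finsupp.smul_single, smul_eq_mul, monomial_mul]
    · show (X 0*X 1^3 : MvPolynomial (Fin 3) ℂ)
        = monomial (Finsupp.single 0 1 + Finsupp.single 1 3) 1
      simp [Xm, X_pow_eq_monomial, monomial_pow, Finsupp.smul_single, smul_eq_mul, monomial_mul]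
    · show (X 1^4 : MvPolynomial (Fin 3) ℂ) = monomial (Finsupp.single 1 4) 1
      simp [Xm, X_pow_eq_monomial, monomial_pow, Finsupp.smul_single, smul_eq_mul]
    · show (X 0^2*X 2 : MvPolynomial (Fin 3) ℂ)
        = monomial (Finsupp.single 0 2 + Finsupp.single 2 1) 1
      simp [Xm, X_pow_eq_monomial, monomial_pow, Finsupp.smul_single, smul_eq_mul, monomial_mul]
    · show (X 0*X 1*X 2 : MvPolynomial (Fin 3) ℂ)
        = monomial (Finsupp.single 0 1 + Finsupp.single 1 1 + Finsupp.single 2 1) 1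
      simp [Xm, X_pow_eq_monomial, monomial_pow, Finsupp.smul_single, smul_eq_mul, monomial_mul]
    · show (X 1^2*X 2 : MvPolynomial (Fin 3) ℂ)
        = monomial (Finsupp.single 1 2 + Finsupp.single 2 1) 1
      simp [Xm, X_pow_eq_monomial, monomial_pow, Finsupp.smul_single, smul_eq_mul, monomial_mul]
    · show (X 2^2 : MvPolynomial (Fin 3) ℂ) = monomial (Finsupp.single 2 2) 1
      simp [Xm, X_pow_eq_monomial, monomial_pow, Finsupp.smul_single, smul_eq_mul]
  rw [φinv, aeval_monomial]
  rw [Finsupp.prod_fintype _ _ (fun i => pow_zero _)]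
  have : ∀ i : Fin 9,
      (![X 0 ^ 4, X 0 ^ 3 * X 1, X 0 ^ 2 * X 1 ^ 2, X 0 * X 1 ^ 3, X 1 ^ 4,
        X 0 ^ 2 * X 2, X 0 * X 1 * X 2, X 1 ^ 2 * X 2, X 2 ^ 2] i : MvPolynomial (Fin 3) ℂ) ^ n i
        = monomial (n i • vv i) 1 := by
    intro i; rw [himg i, monomial_pow, one_pow]
  simp_rw [this]
  rw [prod_monomial, algebraMap_eq, C_mul_monomial, mul_one, MM]

lemma sum_univ_nine {β : Type*} [AddCommMonoid β] (f : Fin 9 → β) :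
    ∑ i, f i = f 0 + f 1 + f 2 + f 3 + f 4 + f 5 + f 6 + f 7 + f 8 := by
  rw [Fin.sum_univ_castSucc, Fin.sum_univ_eight]; rfl

lemma MM_apply (n : Fin 9 →₀ ℕ) :
    MM n 0 = 4*n 0+3*n 1+2*n 2+n 3+2*n 5+n 6 ∧
    MM n 1 = n 1+2*n 2+3*n 3+4*n 4+n 6+2*n 7 ∧
    MM n 2 = n 5+n 6+n 7+2*n 8 := by
  refine ⟨?_, ?_, ?_⟩ <;>
  · rw [MM, sum_univ_nine]
    simp only [show vv 0 = Finsupp.single 0 4 from rfl,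
      show vv 1 = Finsupp.single 0 3 + Finsupp.single 1 1 from rfl,
      show vv 2 = Finsupp.single 0 2 + Finsupp.single 1 2 from rfl,
      show vv 3 = Finsupp.single 0 1 + Finsupp.single 1 3 from rfl,
      show vv 4 = Finsupp.single 1 4 from rfl,
      show vv 5 = Finsupp.single 0 2 + Finsupp.single 2 1 from rfl,
      show vv 6 = Finsupp.single 0 1 + Finsupp.single 1 1 + Finsupp.single 2 1 from rfl,
      show vv 7 = Finsupp.single 1 2 + Finsupp.single 2 1 from rfl,
      show vv 8 = Finsupp.single 2 2 from rfl]
    simp [Finsupp.add_apply, Finsupp.smul_apply, Finsupp.single_apply, smul_eq_mul]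
    ring

lemma coeff_φ (μ : Fin 3 →₀ ℕ) (s : MvPolynomial (Fin 9) ℂ) :
    coeff μ (φinv s) = ∑ n ∈ s.support, if MM n = μ then coeff n s else 0 := by
  conv_lhs => rw [s.as_sum, map_sum]
  rw [coeff_sum]
  exact Finset.sum_congr rfl fun n _ => by rw [φ_monomial, coeff_monomial]

lemma coeff_ker {s : MvPolynomial (Fin 9) ℂ} (hs : s ∈ RingHom.ker φinv)
    (n₀ : Fin 9 →₀ ℕ) (μ : Fin 3 →₀ ℕ) (h : ∀ n : Fin 9 →₀ ℕ, MM n = μ ↔ n = n₀) :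
    coeff n₀ s = 0 := by
  have h0 : coeff μ (φinv s) = 0 := by
    rw [RingHom.mem_ker] at hs; rw [hs]; simp
  rw [coeff_φ] at h0
  rw [← h0]
  simp_rw [h]
  rw [Finset.sum_ite_eq' s.support n₀ (fun n => coeff n s)]
  by_cases hn : n₀ ∈ s.support
  · simp [hn]
  · simp [hn, MvPolynomial.notMem_support_iff.mp hn]

lemma ext9 {n m : Fin 9 →₀ ℕ} (h0 : n 0 = m 0) (h1 : n 1 = m 1) (h2 : n 2 = m 2)
    (h3 : n 3 = m 3) (h4 : n 4 = m 4) (h5 : n 5 = m 5) (h6 : n 6 = m 6)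
    (h7 : n 7 = m 7) (h8 : n 8 = m 8) : n = m := by
  ext k; fin_cases k <;> assumption

lemma ext3 {n m : Fin 3 →₀ ℕ} (h0 : n 0 = m 0) (h1 : n 1 = m 1) (h2 : n 2 = m 2) :
    n = m := by
  ext k; fin_cases k <;> assumption

lemma ker_vanish_zero {s : MvPolynomial (Fin 9) ℂ} (hs : s ∈ RingHom.ker φinv) :
    coeff 0 s = 0 := by
  refine coeff_ker hs 0 0 (fun n => ⟨fun h => ?_, fun h => ?_⟩)
  · obtain ⟨a0, a1, a2⟩ := MM_apply n
    have e0 : MM n 0 = 0 := by rw [h]; rfl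
    have e1 : MM n 1 = 0 := by rw [h]; rfl
    have e2 : MM n 2 = 0 := by rw [h]; rfl
    rw [a0] at e0; rw [a1] at e1; rw [a2] at e2
    apply ext9 <;> simp <;> omega
  · subst h
    obtain ⟨a0, a1, a2⟩ := MM_apply 0
    apply ext3 <;> simp_all

lemma ker_vanish_1 {s : MvPolynomial (Fin 9) ℂ} (hs : s ∈ RingHom.ker φinv) :
    coeff (Finsupp.single 1 1) s = 0 := by
  refine coeff_ker hs _ (Finsupp.single 0 3 + Finsupp.single 1 1 : Fin 3 →₀ ℕ) (fun n => ⟨fun h => ?_, fun h => ?_⟩)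
  · obtain ⟨a0, a1, a2⟩ := MM_apply n
    have e0 : MM n 0 = (Finsupp.single 0 3 + Finsupp.single 1 1 : Fin 3 →₀ ℕ) 0 := by rw [h]
    have e1 : MM n 1 = (Finsupp.single 0 3 + Finsupp.single 1 1 : Fin 3 →₀ ℕ) 1 := by rw [h]
    have e2 : MM n 2 = (Finsupp.single 0 3 + Finsupp.single 1 1 : Fin 3 →₀ ℕ) 2 := by rw [h]
    rw [a0] at e0; rw [a1] at e1; rw [a2] at e2
    simp [Finsupp.single_apply] at e0 e1 e2
    apply ext9 <;> simp [Finsupp.single_apply] <;> omega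
  · subst h
    obtain ⟨a0, a1, a2⟩ := MM_apply (Finsupp.single 1 1)
    apply ext3 <;> simp_all [Finsupp.single_apply]

lemma ker_vanish_2 {s : MvPolynomial (Fin 9) ℂ} (hs : s ∈ RingHom.ker φinv) :
    coeff (Finsupp.single 2 1) s = 0 := by
  refine coeff_ker hs _ (Finsupp.single 0 2 + Finsupp.single 1 2 : Fin 3 →₀ ℕ) (fun n => ⟨fun h => ?_, fun h => ?_⟩)
  · obtain ⟨a0, a1, a2⟩ := MM_apply n
    have e0 : MM n 0 = (Finsupp.single 0 2 + Finsupp.single 1 2 : Fin 3 →₀ ℕ) 0 := by rw [h]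
    have e1 : MM n 1 = (Finsupp.single 0 2 + Finsupp.single 1 2 : Fin 3 →₀ ℕ) 1 := by rw [h]
    have e2 : MM n 2 = (Finsupp.single 0 2 + Finsupp.single 1 2 : Fin 3 →₀ ℕ) 2 := by rw [h]
    rw [a0] at e0; rw [a1] at e1; rw [a2] at e2
    simp [Finsupp.single_apply] at e0 e1 e2
    apply ext9 <;> simp [Finsupp.single_apply] <;> omega
  · subst h
    obtain ⟨a0, a1, a2⟩ := MM_apply (Finsupp.single 2 1)
    apply ext3 <;> simp_all [Finsupp.single_apply]

lemma ker_vanish_3 {s : MvPolynomial (Fin 9) ℂ} (hs : s ∈ RingHom.ker φinv) :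
    coeff (Finsupp.single 3 1) s = 0 := by
  refine coeff_ker hs _ (Finsupp.single 0 1 + Finsupp.single 1 3 : Fin 3 →₀ ℕ) (fun n => ⟨fun h => ?_, fun h => ?_⟩)
  · obtain ⟨a0, a1, a2⟩ := MM_apply n
    have e0 : MM n 0 = (Finsupp.single 0 1 + Finsupp.single 1 3 : Fin 3 →₀ ℕ) 0 := by rw [h]
    have e1 : MM n 1 = (Finsupp.single 0 1 + Finsupp.single 1 3 : Fin 3 →₀ ℕ) 1 := by rw [h]
    have e2 : MM n 2 = (Finsupp.single 0 1 + Finsupp.single 1 3 : Fin 3 →₀ ℕ) 2 := by rw [h]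
    rw [a0] at e0; rw [a1] at e1; rw [a2] at e2
    simp [Finsupp.single_apply] at e0 e1 e2
    apply ext9 <;> simp [Finsupp.single_apply] <;> omega
  · subst h
    obtain ⟨a0, a1, a2⟩ := MM_apply (Finsupp.single 3 1)
    apply ext3 <;> simp_all [Finsupp.single_apply]

lemma ker_vanish_5 {s : MvPolynomial (Fin 9) ℂ} (hs : s ∈ RingHom.ker φinv) :
    coeff (Finsupp.single 5 1) s = 0 := by
  refine coeff_ker hs _ (Finsupp.single 0 2 + Finsupp.single 2 1 : Fin 3 →₀ ℕ) (fun n => ⟨fun h => ?_, fun h => ?_⟩)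
  · obtain ⟨a0, a1, a2⟩ := MM_apply n
    have e0 : MM n 0 = (Finsupp.single 0 2 + Finsupp.single 2 1 : Fin 3 →₀ ℕ) 0 := by rw [h]
    have e1 : MM n 1 = (Finsupp.single 0 2 + Finsupp.single 2 1 : Fin 3 →₀ ℕ) 1 := by rw [h]
    have e2 : MM n 2 = (Finsupp.single 0 2 + Finsupp.single 2 1 : Fin 3 →₀ ℕ) 2 := by rw [h]
    rw [a0] at e0; rw [a1] at e1; rw [a2] at e2
    simp [Finsupp.single_apply] at e0 e1 e2
    apply ext9 <;> simp [Finsupp.single_apply] <;> omega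
  · subst h
    obtain ⟨a0, a1, a2⟩ := MM_apply (Finsupp.single 5 1)
    apply ext3 <;> simp_all [Finsupp.single_apply]

lemma ker_vanish_6 {s : MvPolynomial (Fin 9) ℂ} (hs : s ∈ RingHom.ker φinv) :
    coeff (Finsupp.single 6 1) s = 0 := by
  refine coeff_ker hs _ (Finsupp.single 0 1 + Finsupp.single 1 1 + Finsupp.single 2 1 : Fin 3 →₀ ℕ) (fun n => ⟨fun h => ?_, fun h => ?_⟩)
  · obtain ⟨a0, a1, a2⟩ := MM_apply n
    have e0 : MM n 0 = (Finsupp.single 0 1 + Finsupp.single 1 1 + Finsupp.single 2 1 : Fin 3 →₀ ℕ) 0 := by rw [h]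
    have e1 : MM n 1 = (Finsupp.single 0 1 + Finsupp.single 1 1 + Finsupp.single 2 1 : Fin 3 →₀ ℕ) 1 := by rw [h]
    have e2 : MM n 2 = (Finsupp.single 0 1 + Finsupp.single 1 1 + Finsupp.single 2 1 : Fin 3 →₀ ℕ) 2 := by rw [h]
    rw [a0] at e0; rw [a1] at e1; rw [a2] at e2
    simp [Finsupp.single_apply] at e0 e1 e2
    apply ext9 <;> simp [Finsupp.single_apply] <;> omega
  · subst h
    obtain ⟨a0, a1, a2⟩ := MM_apply (Finsupp.single 6 1)
    apply ext3 <;> simp_all [Finsupp.single_apply]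

lemma ker_vanish_7 {s : MvPolynomial (Fin 9) ℂ} (hs : s ∈ RingHom.ker φinv) :
    coeff (Finsupp.single 7 1) s = 0 := by
  refine coeff_ker hs _ (Finsupp.single 1 2 + Finsupp.single 2 1 : Fin 3 →₀ ℕ) (fun n => ⟨fun h => ?_, fun h => ?_⟩)
  · obtain ⟨a0, a1, a2⟩ := MM_apply n
    have e0 : MM n 0 = (Finsupp.single 1 2 + Finsupp.single 2 1 : Fin 3 →₀ ℕ) 0 := by rw [h]
    have e1 : MM n 1 = (Finsupp.single 1 2 + Finsupp.single 2 1 : Fin 3 →₀ ℕ) 1 := by rw [h]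
    have e2 : MM n 2 = (Finsupp.single 1 2 + Finsupp.single 2 1 : Fin 3 →₀ ℕ) 2 := by rw [h]
    rw [a0] at e0; rw [a1] at e1; rw [a2] at e2
    simp [Finsupp.single_apply] at e0 e1 e2
    apply ext9 <;> simp [Finsupp.single_apply] <;> omega
  · subst h
    obtain ⟨a0, a1, a2⟩ := MM_apply (Finsupp.single 7 1)
    apply ext3 <;> simp_all [Finsupp.single_apply]

lemma coeff_mul_ker {g s : MvPolynomial (Fin 9) ℂ} {m : Fin 9 →₀ ℕ}
    (h : ∀ v : Fin 9 →₀ ℕ, v ≤ m → v ≠ m → coeff v s = 0) :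
    coeff m (g * s) = coeff 0 g * coeff m s := by
  rw [coeff_mul]
  apply Finset.sum_eq_single (0, m)
  · rintro ⟨u, v⟩ hmem hne
    rw [Finset.HasAntidiagonal.mem_antidiagonal] at hmem
    by_cases hv : v = m
    · subst hv
      have hu : u = 0 := by
        have : u + v = 0 + v := by rw [hmem, zero_add]
        exact add_right_cancel this
      exact absurd (by rw [hu]) hne
    · have hle : v ≤ m := hmem ▸ self_le_add_left v u
      rw [h v hle hv, mul_zero]
  · intro hnot
    exact absurd (Finset.HasAntidiagonal.mem_antidiagonal.mpr (zero_add m)) hnot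

lemma coeff_mul_ker_sq {g s : MvPolynomial (Fin 9) ℂ} (a : Fin 9)
    (hs0 : coeff 0 s = 0) (hs1 : coeff (Finsupp.single a 1) s = 0) :
    coeff (Finsupp.single a 2) (g * s) = coeff 0 g * coeff (Finsupp.single a 2) s := by
  apply coeff_mul_ker
  intro v hle hne
  have hco : ∀ k, v k ≤ (Finsupp.single a 2) k := Finsupp.le_def.mp hle
  have hva : v = Finsupp.single a (v a) := by
    ext k
    by_cases hk : k = a
    · subst hk; simp
    · have h1 := hco k
      rw [Finsupp.single_apply, if_neg (fun h => hk h.symm)] at h1 ⊢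
      omega
  have h2 : v a ≤ 2 := by have := hco a; simpa using this
  have h3 : v a ≠ 2 := fun h => hne (by rw [hva, h])
  have : v a = 0 ∨ v a = 1 := by omega
  rcases this with h | h
  · rw [hva, h, Finsupp.single_zero]; exact hs0
  · rw [hva, h]; exact hs1

lemma coeff_mul_ker_mixed {g s : MvPolynomial (Fin 9) ℂ}
    (hs0 : coeff 0 s = 0) (hs5 : coeff (Finsupp.single 5 1) s = 0)
    (hs7 : coeff (Finsupp.single 7 1) s = 0) :
    coeff (Finsupp.single 5 1 + Finsupp.single 7 1) (g * s)
      = coeff 0 g * coeff (Finsupp.single 5 1 + Finsupp.single 7 1) s := by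
  apply coeff_mul_ker
  intro v hle hne
  have hco : ∀ k, v k ≤ (Finsupp.single 5 1 + Finsupp.single 7 1 : Fin 9 →₀ ℕ) k :=
    Finsupp.le_def.mp hle
  have hva : v = Finsupp.single 5 (v 5) + Finsupp.single 7 (v 7) := by
    ext k
    rw [Finsupp.add_apply, Finsupp.single_apply, Finsupp.single_apply]
    by_cases h5 : (5 : Fin 9) = k
    · subst h5; simp
    · by_cases h7 : (7 : Fin 9) = k
      · subst h7; simp
      · have h1 := hco k
        rw [Finsupp.add_apply, Finsupp.single_apply, Finsupp.single_apply,
          if_neg h5, if_neg h7] at h1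
        rw [if_neg h5, if_neg h7]
        omega
  have h5 : v 5 ≤ 1 := by have := hco 5; simpa using this
  have h7 : v 7 ≤ 1 := by have := hco 7; simpa using this
  have hnot : ¬ (v 5 = 1 ∧ v 7 = 1) := by
    rintro ⟨e5, e7⟩; exact hne (by rw [hva, e5, e7])
  rcases Nat.le_one_iff_eq_zero_or_eq_one.mp h5 with e5 | e5 <;>
    rcases Nat.le_one_iff_eq_zero_or_eq_one.mp h7 with e7 | e7
  · rw [hva, e5, e7]; simpa using hs0
  · rw [hva, e5, e7]; simpa using hs7
  · rw [hva, e5, e7]; simpa using hs5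
  · exact absurd ⟨e5, e7⟩ hnot

lemma forall9 {p : Fin 9 → Prop} :
    (∀ k : Fin 9, p k) ↔ p 0 ∧ p 1 ∧ p 2 ∧ p 3 ∧ p 4 ∧ p 5 ∧ p 6 ∧ p 7 ∧ p 8 :=
  ⟨fun h => ⟨h 0, h 1, h 2, h 3, h 4, h 5, h 6, h 7, h 8⟩,
   fun ⟨h0, h1, h2, h3, h4, h5, h6, h7, h8⟩ k => by fin_cases k <;> assumption⟩

lemma Xmon : ∀ a : Fin 9, (X a : MvPolynomial (Fin 9) ℂ) = monomial (Finsupp.single a 1) 1 :=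
  fun a => rfl

noncomputable def mset : Fin 7 → (Fin 9 →₀ ℕ) :=
  ![Finsupp.single 1 2, Finsupp.single 2 2, Finsupp.single 3 2, Finsupp.single 5 2, Finsupp.single 6 2, Finsupp.single 7 2, Finsupp.single 5 1 + Finsupp.single 7 1]

noncomputable def qq : Fin 7 → MvPolynomial (Fin 9) ℂ :=
  ![X 1^2 - X 0*X 2, X 2^2 - X 1*X 3, X 3^2 - X 2*X 4, X 5^2 - X 0*X 8, X 6^2 - X 2*X 8, X 7^2 - X 4*X 8, X 5*X 7 - X 6^2]

noncomputable def T : MvPolynomial (Fin 9) ℂ →ₗ[ℂ] (Fin 7 → ℂ) where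
  toFun f := fun j => coeff (mset j) f
  map_add' := by intros; funext j; simp [coeff_add]
  map_smul' := by intros; funext j; simp [coeff_smul]

lemma qq_ker : ∀ j, qq j ∈ RingHom.ker φinv := by
  have hX0 : φinv (X 0) = X 0^4 := by rw [φinv, aeval_X]; rfl
  have hX1 : φinv (X 1) = X 0^3*X 1 := by rw [φinv, aeval_X]; rfl
  have hX2 : φinv (X 2) = X 0^2*X 1^2 := by rw [φinv, aeval_X]; rfl
  have hX3 : φinv (X 3) = X 0*X 1^3 := by rw [φinv, aeval_X]; rfl
  have hX4 : φinv (X 4) = X 1^4 := by rw [φinv, aeval_X]; rfl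
  have hX5 : φinv (X 5) = X 0^2*X 2 := by rw [φinv, aeval_X]; rfl
  have hX6 : φinv (X 6) = X 0*X 1*X 2 := by rw [φinv, aeval_X]; rfl
  have hX7 : φinv (X 7) = X 1^2*X 2 := by rw [φinv, aeval_X]; rfl
  have hX8 : φinv (X 8) = X 2^2 := by rw [φinv, aeval_X]; rfl
  intro j
  rw [RingHom.mem_ker]
  fin_cases j
  · show φinv (X 1^2 - X 0*X 2 : MvPolynomial (Fin 9) ℂ) = 0
    rw [map_sub, map_pow, map_mul, hX1, hX0, hX2]; ring
  · show φinv (X 2^2 - X 1*X 3 : MvPolynomial (Fin 9) ℂ) = 0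
    rw [map_sub, map_pow, map_mul, hX2, hX1, hX3]; ring
  · show φinv (X 3^2 - X 2*X 4 : MvPolynomial (Fin 9) ℂ) = 0
    rw [map_sub, map_pow, map_mul, hX3, hX2, hX4]; ring
  · show φinv (X 5^2 - X 0*X 8 : MvPolynomial (Fin 9) ℂ) = 0
    rw [map_sub, map_pow, map_mul, hX5, hX0, hX8]; ring
  · show φinv (X 6^2 - X 2*X 8 : MvPolynomial (Fin 9) ℂ) = 0
    rw [map_sub, map_pow, map_mul, hX6, hX2, hX8]; ring
  · show φinv (X 7^2 - X 4*X 8 : MvPolynomial (Fin 9) ℂ) = 0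
    rw [map_sub, map_pow, map_mul, hX7, hX4, hX8]; ring
  · show φinv (X 5*X 7 - X 6^2 : MvPolynomial (Fin 9) ℂ) = 0
    rw [map_sub, map_pow, map_mul, hX5, hX7, hX6]; ring

lemma Tqq_0 : T (qq 0) = ![1, 0, 0, 0, 0, 0, 0] := by
  funext j'
  fin_cases j'
  · show coeff (Finsupp.single 1 2) (X 1^2 - X 0*X 2 : MvPolynomial (Fin 9) ℂ) = 1
    simp [Xmon, X_pow_eq_monomial, monomial_mul, monomial_pow, Finsupp.smul_single,
      smul_eq_mul, coeff_monomial, Finsupp.ext_iff, forall9,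
      Finsupp.single_apply, Finsupp.add_apply]
  · show coeff (Finsupp.single 2 2) (X 1^2 - X 0*X 2 : MvPolynomial (Fin 9) ℂ) = 0
    simp [Xmon, X_pow_eq_monomial, monomial_mul, monomial_pow, Finsupp.smul_single,
      smul_eq_mul, coeff_monomial, Finsupp.ext_iff, forall9,
      Finsupp.single_apply, Finsupp.add_apply]
  · show coeff (Finsupp.single 3 2) (X 1^2 - X 0*X 2 : MvPolynomial (Fin 9) ℂ) = 0
    simp [Xmon, X_pow_eq_monomial, monomial_mul, monomial_pow, Finsupp.smul_single,
      smul_eq_mul, coeff_monomial, Finsupp.ext_iff, forall9,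
      Finsupp.single_apply, Finsupp.add_apply]
  · show coeff (Finsupp.single 5 2) (X 1^2 - X 0*X 2 : MvPolynomial (Fin 9) ℂ) = 0
    simp [Xmon, X_pow_eq_monomial, monomial_mul, monomial_pow, Finsupp.smul_single,
      smul_eq_mul, coeff_monomial, Finsupp.ext_iff, forall9,
      Finsupp.single_apply, Finsupp.add_apply]
  · show coeff (Finsupp.single 6 2) (X 1^2 - X 0*X 2 : MvPolynomial (Fin 9) ℂ) = 0
    simp [Xmon, X_pow_eq_monomial, monomial_mul, monomial_pow, Finsupp.smul_single,
      smul_eq_mul, coeff_monomial, Finsupp.ext_iff, forall9,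
      Finsupp.single_apply, Finsupp.add_apply]
  · show coeff (Finsupp.single 7 2) (X 1^2 - X 0*X 2 : MvPolynomial (Fin 9) ℂ) = 0
    simp [Xmon, X_pow_eq_monomial, monomial_mul, monomial_pow, Finsupp.smul_single,
      smul_eq_mul, coeff_monomial, Finsupp.ext_iff, forall9,
      Finsupp.single_apply, Finsupp.add_apply]
  · show coeff (Finsupp.single 5 1 + Finsupp.single 7 1) (X 1^2 - X 0*X 2 : MvPolynomial (Fin 9) ℂ) = 0
    simp [Xmon, X_pow_eq_monomial, monomial_mul, monomial_pow, Finsupp.smul_single,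
      smul_eq_mul, coeff_monomial, Finsupp.ext_iff, forall9,
      Finsupp.single_apply, Finsupp.add_apply]

lemma Tqq_1 : T (qq 1) = ![0, 1, 0, 0, 0, 0, 0] := by
  funext j'
  fin_cases j'
  · show coeff (Finsupp.single 1 2) (X 2^2 - X 1*X 3 : MvPolynomial (Fin 9) ℂ) = 0
    simp [Xmon, X_pow_eq_monomial, monomial_mul, monomial_pow, Finsupp.smul_single,
      smul_eq_mul, coeff_monomial, Finsupp.ext_iff, forall9,
      Finsupp.single_apply, Finsupp.add_apply]
  · show coeff (Finsupp.single 2 2) (X 2^2 - X 1*X 3 : MvPolynomial (Fin 9) ℂ) = 1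
    simp [Xmon, X_pow_eq_monomial, monomial_mul, monomial_pow, Finsupp.smul_single,
      smul_eq_mul, coeff_monomial, Finsupp.ext_iff, forall9,
      Finsupp.single_apply, Finsupp.add_apply]
  · show coeff (Finsupp.single 3 2) (X 2^2 - X 1*X 3 : MvPolynomial (Fin 9) ℂ) = 0
    simp [Xmon, X_pow_eq_monomial, monomial_mul, monomial_pow, Finsupp.smul_single,
      smul_eq_mul, coeff_monomial, Finsupp.ext_iff, forall9,
      Finsupp.single_apply, Finsupp.add_apply]
  · show coeff (Finsupp.single 5 2) (X 2^2 - X 1*X 3 : MvPolynomial (Fin 9) ℂ) = 0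
    simp [Xmon, X_pow_eq_monomial, monomial_mul, monomial_pow, Finsupp.smul_single,
      smul_eq_mul, coeff_monomial, Finsupp.ext_iff, forall9,
      Finsupp.single_apply, Finsupp.add_apply]
  · show coeff (Finsupp.single 6 2) (X 2^2 - X 1*X 3 : MvPolynomial (Fin 9) ℂ) = 0
    simp [Xmon, X_pow_eq_monomial, monomial_mul, monomial_pow, Finsupp.smul_single,
      smul_eq_mul, coeff_monomial, Finsupp.ext_iff, forall9,
      Finsupp.single_apply, Finsupp.add_apply]
  · show coeff (Finsupp.single 7 2) (X 2^2 - X 1*X 3 : MvPolynomial (Fin 9) ℂ) = 0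
    simp [Xmon, X_pow_eq_monomial, monomial_mul, monomial_pow, Finsupp.smul_single,
      smul_eq_mul, coeff_monomial, Finsupp.ext_iff, forall9,
      Finsupp.single_apply, Finsupp.add_apply]
  · show coeff (Finsupp.single 5 1 + Finsupp.single 7 1) (X 2^2 - X 1*X 3 : MvPolynomial (Fin 9) ℂ) = 0
    simp [Xmon, X_pow_eq_monomial, monomial_mul, monomial_pow, Finsupp.smul_single,
      smul_eq_mul, coeff_monomial, Finsupp.ext_iff, forall9,
      Finsupp.single_apply, Finsupp.add_apply]

lemma Tqq_2 : T (qq 2) = ![0, 0, 1, 0, 0, 0, 0] := by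
  funext j'
  fin_cases j'
  · show coeff (Finsupp.single 1 2) (X 3^2 - X 2*X 4 : MvPolynomial (Fin 9) ℂ) = 0
    simp [Xmon, X_pow_eq_monomial, monomial_mul, monomial_pow, Finsupp.smul_single,
      smul_eq_mul, coeff_monomial, Finsupp.ext_iff, forall9,
      Finsupp.single_apply, Finsupp.add_apply]
  · show coeff (Finsupp.single 2 2) (X 3^2 - X 2*X 4 : MvPolynomial (Fin 9) ℂ) = 0
    simp [Xmon, X_pow_eq_monomial, monomial_mul, monomial_pow, Finsupp.smul_single,
      smul_eq_mul, coeff_monomial, Finsupp.ext_iff, forall9,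
      Finsupp.single_apply, Finsupp.add_apply]
  · show coeff (Finsupp.single 3 2) (X 3^2 - X 2*X 4 : MvPolynomial (Fin 9) ℂ) = 1
    simp [Xmon, X_pow_eq_monomial, monomial_mul, monomial_pow, Finsupp.smul_single,
      smul_eq_mul, coeff_monomial, Finsupp.ext_iff, forall9,
      Finsupp.single_apply, Finsupp.add_apply]
  · show coeff (Finsupp.single 5 2) (X 3^2 - X 2*X 4 : MvPolynomial (Fin 9) ℂ) = 0
    simp [Xmon, X_pow_eq_monomial, monomial_mul, monomial_pow, Finsupp.smul_single,
      smul_eq_mul, coeff_monomial, Finsupp.ext_iff, forall9,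
      Finsupp.single_apply, Finsupp.add_apply]
  · show coeff (Finsupp.single 6 2) (X 3^2 - X 2*X 4 : MvPolynomial (Fin 9) ℂ) = 0
    simp [Xmon, X_pow_eq_monomial, monomial_mul, monomial_pow, Finsupp.smul_single,
      smul_eq_mul, coeff_monomial, Finsupp.ext_iff, forall9,
      Finsupp.single_apply, Finsupp.add_apply]
  · show coeff (Finsupp.single 7 2) (X 3^2 - X 2*X 4 : MvPolynomial (Fin 9) ℂ) = 0
    simp [Xmon, X_pow_eq_monomial, monomial_mul, monomial_pow, Finsupp.smul_single,
      smul_eq_mul, coeff_monomial, Finsupp.ext_iff, forall9,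
      Finsupp.single_apply, Finsupp.add_apply]
  · show coeff (Finsupp.single 5 1 + Finsupp.single 7 1) (X 3^2 - X 2*X 4 : MvPolynomial (Fin 9) ℂ) = 0
    simp [Xmon, X_pow_eq_monomial, monomial_mul, monomial_pow, Finsupp.smul_single,
      smul_eq_mul, coeff_monomial, Finsupp.ext_iff, forall9,
      Finsupp.single_apply, Finsupp.add_apply]

lemma Tqq_3 : T (qq 3) = ![0, 0, 0, 1, 0, 0, 0] := by
  funext j'
  fin_cases j'
  · show coeff (Finsupp.single 1 2) (X 5^2 - X 0*X 8 : MvPolynomial (Fin 9) ℂ) = 0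
    simp [Xmon, X_pow_eq_monomial, monomial_mul, monomial_pow, Finsupp.smul_single,
      smul_eq_mul, coeff_monomial, Finsupp.ext_iff, forall9,
      Finsupp.single_apply, Finsupp.add_apply]
  · show coeff (Finsupp.single 2 2) (X 5^2 - X 0*X 8 : MvPolynomial (Fin 9) ℂ) = 0
    simp [Xmon, X_pow_eq_monomial, monomial_mul, monomial_pow, Finsupp.smul_single,
      smul_eq_mul, coeff_monomial, Finsupp.ext_iff, forall9,
      Finsupp.single_apply, Finsupp.add_apply]
  · show coeff (Finsupp.single 3 2) (X 5^2 - X 0*X 8 : MvPolynomial (Fin 9) ℂ) = 0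
    simp [Xmon, X_pow_eq_monomial, monomial_mul, monomial_pow, Finsupp.smul_single,
      smul_eq_mul, coeff_monomial, Finsupp.ext_iff, forall9,
      Finsupp.single_apply, Finsupp.add_apply]
  · show coeff (Finsupp.single 5 2) (X 5^2 - X 0*X 8 : MvPolynomial (Fin 9) ℂ) = 1
    simp [Xmon, X_pow_eq_monomial, monomial_mul, monomial_pow, Finsupp.smul_single,
      smul_eq_mul, coeff_monomial, Finsupp.ext_iff, forall9,
      Finsupp.single_apply, Finsupp.add_apply]
  · show coeff (Finsupp.single 6 2) (X 5^2 - X 0*X 8 : MvPolynomial (Fin 9) ℂ) = 0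
    simp [Xmon, X_pow_eq_monomial, monomial_mul, monomial_pow, Finsupp.smul_single,
      smul_eq_mul, coeff_monomial, Finsupp.ext_iff, forall9,
      Finsupp.single_apply, Finsupp.add_apply]
  · show coeff (Finsupp.single 7 2) (X 5^2 - X 0*X 8 : MvPolynomial (Fin 9) ℂ) = 0
    simp [Xmon, X_pow_eq_monomial, monomial_mul, monomial_pow, Finsupp.smul_single,
      smul_eq_mul, coeff_monomial, Finsupp.ext_iff, forall9,
      Finsupp.single_apply, Finsupp.add_apply]
  · show coeff (Finsupp.single 5 1 + Finsupp.single 7 1) (X 5^2 - X 0*X 8 : MvPolynomial (Fin 9) ℂ) = 0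
    simp [Xmon, X_pow_eq_monomial, monomial_mul, monomial_pow, Finsupp.smul_single,
      smul_eq_mul, coeff_monomial, Finsupp.ext_iff, forall9,
      Finsupp.single_apply, Finsupp.add_apply]

lemma Tqq_4 : T (qq 4) = ![0, 0, 0, 0, 1, 0, 0] := by
  funext j'
  fin_cases j'
  · show coeff (Finsupp.single 1 2) (X 6^2 - X 2*X 8 : MvPolynomial (Fin 9) ℂ) = 0
    simp [Xmon, X_pow_eq_monomial, monomial_mul, monomial_pow, Finsupp.smul_single,
      smul_eq_mul, coeff_monomial, Finsupp.ext_iff, forall9,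
      Finsupp.single_apply, Finsupp.add_apply]
  · show coeff (Finsupp.single 2 2) (X 6^2 - X 2*X 8 : MvPolynomial (Fin 9) ℂ) = 0
    simp [Xmon, X_pow_eq_monomial, monomial_mul, monomial_pow, Finsupp.smul_single,
      smul_eq_mul, coeff_monomial, Finsupp.ext_iff, forall9,
      Finsupp.single_apply, Finsupp.add_apply]
  · show coeff (Finsupp.single 3 2) (X 6^2 - X 2*X 8 : MvPolynomial (Fin 9) ℂ) = 0
    simp [Xmon, X_pow_eq_monomial, monomial_mul, monomial_pow, Finsupp.smul_single,
      smul_eq_mul, coeff_monomial, Finsupp.ext_iff, forall9,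
      Finsupp.single_apply, Finsupp.add_apply]
  · show coeff (Finsupp.single 5 2) (X 6^2 - X 2*X 8 : MvPolynomial (Fin 9) ℂ) = 0
    simp [Xmon, X_pow_eq_monomial, monomial_mul, monomial_pow, Finsupp.smul_single,
      smul_eq_mul, coeff_monomial, Finsupp.ext_iff, forall9,
      Finsupp.single_apply, Finsupp.add_apply]
  · show coeff (Finsupp.single 6 2) (X 6^2 - X 2*X 8 : MvPolynomial (Fin 9) ℂ) = 1
    simp [Xmon, X_pow_eq_monomial, monomial_mul, monomial_pow, Finsupp.smul_single,
      smul_eq_mul, coeff_monomial, Finsupp.ext_iff, forall9,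
      Finsupp.single_apply, Finsupp.add_apply]
  · show coeff (Finsupp.single 7 2) (X 6^2 - X 2*X 8 : MvPolynomial (Fin 9) ℂ) = 0
    simp [Xmon, X_pow_eq_monomial, monomial_mul, monomial_pow, Finsupp.smul_single,
      smul_eq_mul, coeff_monomial, Finsupp.ext_iff, forall9,
      Finsupp.single_apply, Finsupp.add_apply]
  · show coeff (Finsupp.single 5 1 + Finsupp.single 7 1) (X 6^2 - X 2*X 8 : MvPolynomial (Fin 9) ℂ) = 0
    simp [Xmon, X_pow_eq_monomial, monomial_mul, monomial_pow, Finsupp.smul_single,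
      smul_eq_mul, coeff_monomial, Finsupp.ext_iff, forall9,
      Finsupp.single_apply, Finsupp.add_apply]

lemma Tqq_5 : T (qq 5) = ![0, 0, 0, 0, 0, 1, 0] := by
  funext j'
  fin_cases j'
  · show coeff (Finsupp.single 1 2) (X 7^2 - X 4*X 8 : MvPolynomial (Fin 9) ℂ) = 0
    simp [Xmon, X_pow_eq_monomial, monomial_mul, monomial_pow, Finsupp.smul_single,
      smul_eq_mul, coeff_monomial, Finsupp.ext_iff, forall9,
      Finsupp.single_apply, Finsupp.add_apply]
  · show coeff (Finsupp.single 2 2) (X 7^2 - X 4*X 8 : MvPolynomial (Fin 9) ℂ) = 0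
    simp [Xmon, X_pow_eq_monomial, monomial_mul, monomial_pow, Finsupp.smul_single,
      smul_eq_mul, coeff_monomial, Finsupp.ext_iff, forall9,
      Finsupp.single_apply, Finsupp.add_apply]
  · show coeff (Finsupp.single 3 2) (X 7^2 - X 4*X 8 : MvPolynomial (Fin 9) ℂ) = 0
    simp [Xmon, X_pow_eq_monomial, monomial_mul, monomial_pow, Finsupp.smul_single,
      smul_eq_mul, coeff_monomial, Finsupp.ext_iff, forall9,
      Finsupp.single_apply, Finsupp.add_apply]
  · show coeff (Finsupp.single 5 2) (X 7^2 - X 4*X 8 : MvPolynomial (Fin 9) ℂ) = 0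
    simp [Xmon, X_pow_eq_monomial, monomial_mul, monomial_pow, Finsupp.smul_single,
      smul_eq_mul, coeff_monomial, Finsupp.ext_iff, forall9,
      Finsupp.single_apply, Finsupp.add_apply]
  · show coeff (Finsupp.single 6 2) (X 7^2 - X 4*X 8 : MvPolynomial (Fin 9) ℂ) = 0
    simp [Xmon, X_pow_eq_monomial, monomial_mul, monomial_pow, Finsupp.smul_single,
      smul_eq_mul, coeff_monomial, Finsupp.ext_iff, forall9,
      Finsupp.single_apply, Finsupp.add_apply]
  · show coeff (Finsupp.single 7 2) (X 7^2 - X 4*X 8 : MvPolynomial (Fin 9) ℂ) = 1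
    simp [Xmon, X_pow_eq_monomial, monomial_mul, monomial_pow, Finsupp.smul_single,
      smul_eq_mul, coeff_monomial, Finsupp.ext_iff, forall9,
      Finsupp.single_apply, Finsupp.add_apply]
  · show coeff (Finsupp.single 5 1 + Finsupp.single 7 1) (X 7^2 - X 4*X 8 : MvPolynomial (Fin 9) ℂ) = 0
    simp [Xmon, X_pow_eq_monomial, monomial_mul, monomial_pow, Finsupp.smul_single,
      smul_eq_mul, coeff_monomial, Finsupp.ext_iff, forall9,
      Finsupp.single_apply, Finsupp.add_apply]

lemma Tqq_6 : T (qq 6) = ![0, 0, 0, 0, -1, 0, 1] := by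
  funext j'
  fin_cases j'
  · show coeff (Finsupp.single 1 2) (X 5*X 7 - X 6^2 : MvPolynomial (Fin 9) ℂ) = 0
    simp [Xmon, X_pow_eq_monomial, monomial_mul, monomial_pow, Finsupp.smul_single,
      smul_eq_mul, coeff_monomial, Finsupp.ext_iff, forall9,
      Finsupp.single_apply, Finsupp.add_apply]
  · show coeff (Finsupp.single 2 2) (X 5*X 7 - X 6^2 : MvPolynomial (Fin 9) ℂ) = 0
    simp [Xmon, X_pow_eq_monomial, monomial_mul, monomial_pow, Finsupp.smul_single,
      smul_eq_mul, coeff_monomial, Finsupp.ext_iff, forall9,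
      Finsupp.single_apply, Finsupp.add_apply]
  · show coeff (Finsupp.single 3 2) (X 5*X 7 - X 6^2 : MvPolynomial (Fin 9) ℂ) = 0
    simp [Xmon, X_pow_eq_monomial, monomial_mul, monomial_pow, Finsupp.smul_single,
      smul_eq_mul, coeff_monomial, Finsupp.ext_iff, forall9,
      Finsupp.single_apply, Finsupp.add_apply]
  · show coeff (Finsupp.single 5 2) (X 5*X 7 - X 6^2 : MvPolynomial (Fin 9) ℂ) = 0
    simp [Xmon, X_pow_eq_monomial, monomial_mul, monomial_pow, Finsupp.smul_single,
      smul_eq_mul, coeff_monomial, Finsupp.ext_iff, forall9,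
      Finsupp.single_apply, Finsupp.add_apply]
  · show coeff (Finsupp.single 6 2) (X 5*X 7 - X 6^2 : MvPolynomial (Fin 9) ℂ) = -1
    simp [Xmon, X_pow_eq_monomial, monomial_mul, monomial_pow, Finsupp.smul_single,
      smul_eq_mul, coeff_monomial, Finsupp.ext_iff, forall9,
      Finsupp.single_apply, Finsupp.add_apply]
  · show coeff (Finsupp.single 7 2) (X 5*X 7 - X 6^2 : MvPolynomial (Fin 9) ℂ) = 0
    simp [Xmon, X_pow_eq_monomial, monomial_mul, monomial_pow, Finsupp.smul_single,
      smul_eq_mul, coeff_monomial, Finsupp.ext_iff, forall9,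
      Finsupp.single_apply, Finsupp.add_apply]
  · show coeff (Finsupp.single 5 1 + Finsupp.single 7 1) (X 5*X 7 - X 6^2 : MvPolynomial (Fin 9) ℂ) = 1
    simp [Xmon, X_pow_eq_monomial, monomial_mul, monomial_pow, Finsupp.smul_single,
      smul_eq_mul, coeff_monomial, Finsupp.ext_iff, forall9,
      Finsupp.single_apply, Finsupp.add_apply]

/-- The kernel of `φ` (the defining ideal of `ℂ³/ℤ₄ ⊂ ℂ⁹`) cannot be
generated by six elements: there is no finite set `S` of polynomials with `card S ≤ 6`
whose ideal span equals `ker φ`.  (`ℂ³/ℤ₄` is not a schematic complete intersection.) -/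
theorem stmt_19 :
    ¬ ∃ S : Finset (MvPolynomial (Fin 9) ℂ),
        S.card ≤ 6 ∧ Ideal.span (S : Set (MvPolynomial (Fin 9) ℂ)) = RingHom.ker φinv := by
  rintro ⟨S, hcard, hspan⟩
  have hsker : ∀ s ∈ S, s ∈ RingHom.ker φinv := fun s hs => by
    rw [← hspan]; exact Ideal.subset_span hs
  set N : Submodule ℂ (Fin 7 → ℂ) :=
    Submodule.span ℂ ((S.image (fun s => T s) : Finset (Fin 7 → ℂ)) : Set (Fin 7 → ℂ)) with hN
  have hTI : ∀ f ∈ RingHom.ker φinv, T f ∈ N := by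
    intro f hf
    rw [← hspan] at hf
    obtain ⟨c, -, hc⟩ := Submodule.mem_span_finset.mp hf
    rw [← hc, map_sum]
    apply Submodule.sum_mem
    intro s hsS
    have hks := hsker s hsS
    have hTs : T (c s • s) = coeff 0 (c s) • T s := by
      funext j
      show coeff (mset j) (c s • s) = coeff 0 (c s) * coeff (mset j) s
      rw [smul_eq_mul]
      fin_cases j
      · show coeff (Finsupp.single 1 2) (c s * s) = coeff 0 (c s) * coeff (Finsupp.single 1 2) s
        exact coeff_mul_ker_sq 1 (ker_vanish_zero hks) (ker_vanish_1 hks)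
      · show coeff (Finsupp.single 2 2) (c s * s) = coeff 0 (c s) * coeff (Finsupp.single 2 2) s
        exact coeff_mul_ker_sq 2 (ker_vanish_zero hks) (ker_vanish_2 hks)
      · show coeff (Finsupp.single 3 2) (c s * s) = coeff 0 (c s) * coeff (Finsupp.single 3 2) s
        exact coeff_mul_ker_sq 3 (ker_vanish_zero hks) (ker_vanish_3 hks)
      · show coeff (Finsupp.single 5 2) (c s * s) = coeff 0 (c s) * coeff (Finsupp.single 5 2) s
        exact coeff_mul_ker_sq 5 (ker_vanish_zero hks) (ker_vanish_5 hks)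
      · show coeff (Finsupp.single 6 2) (c s * s) = coeff 0 (c s) * coeff (Finsupp.single 6 2) s
        exact coeff_mul_ker_sq 6 (ker_vanish_zero hks) (ker_vanish_6 hks)
      · show coeff (Finsupp.single 7 2) (c s * s) = coeff 0 (c s) * coeff (Finsupp.single 7 2) s
        exact coeff_mul_ker_sq 7 (ker_vanish_zero hks) (ker_vanish_7 hks)
      · show coeff (Finsupp.single 5 1 + Finsupp.single 7 1) (c s * s) = coeff 0 (c s) * coeff (Finsupp.single 5 1 + Finsupp.single 7 1) s
        exact coeff_mul_ker_mixed (ker_vanish_zero hks) (ker_vanish_5 hks) (ker_vanish_7 hks)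
    rw [hTs]
    exact Submodule.smul_mem _ _
      (Submodule.subset_span (Finset.mem_coe.mpr (Finset.mem_image_of_mem _ hsS)))
  have hsing : ∀ j : Fin 7, T (qq j) ∈ N := fun j => hTI _ (qq_ker j)
  have hvec : ∀ j : Fin 7, (fun j' => if j = j' then (1:ℂ) else 0) ∈ N := by
    intro j
    fin_cases j
    · have := hsing 0; rw [Tqq_0] at this
      convert this using 1; funext j'; fin_cases j' <;> first | rfl | norm_num [Fin.ext_iff]
    · have := hsing 1; rw [Tqq_1] at this
      convert this using 1; funext j'; fin_cases j' <;> first | rfl | norm_num [Fin.ext_iff]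
    · have := hsing 2; rw [Tqq_2] at this
      convert this using 1; funext j'; fin_cases j' <;> first | rfl | norm_num [Fin.ext_iff]
    · have := hsing 3; rw [Tqq_3] at this
      convert this using 1; funext j'; fin_cases j' <;> first | rfl | norm_num [Fin.ext_iff]
    · have := hsing 4; rw [Tqq_4] at this
      convert this using 1; funext j'; fin_cases j' <;> first | rfl | norm_num [Fin.ext_iff]
    · have := hsing 5; rw [Tqq_5] at this
      convert this using 1; funext j'; fin_cases j' <;> first | rfl | norm_num [Fin.ext_iff]
    · have h1 := N.add_mem (hsing 6) (hsing 4)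
      rw [Tqq_6, Tqq_4] at h1
      convert h1 using 1; funext j'; fin_cases j' <;> first | rfl | norm_num [Fin.ext_iff]
  have hNtop : N = ⊤ := by
    rw [eq_top_iff]
    intro x _
    rw [pi_eq_sum_univ x]
    exact Submodule.sum_mem _ fun j _ => Submodule.smul_mem _ _ (hvec j)
  have h7 : Module.finrank ℂ N = 7 := by
    rw [hNtop, finrank_top]
    simp
  have hle : Module.finrank ℂ N ≤ (S.image (fun s => T s)).card :=
    finrank_span_finset_le_card _
  have hc2 : (S.image (fun s => T s)).card ≤ S.card := Finset.card_image_le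
  omega
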